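/- Let n ≥ 3 be an even integer and write n = 2^k m with k ≥ 1 and m odd. Then the independence number of the prime-coprime graph of the dicyclic group Q_{4n} of order 4n equals 4n − 2m. -/

import Mathlib

/-- The prime-coprime graph: distinct vertices `g, h` are adjacent iff
`gcd (orderOf g) (orderOf h)` is `1` or a prime. -/
def primeCoprimeGraph (G : Type*) [Monoid G] : SimpleGraph G where
  Adj g h := g ≠ h ∧
    (Nat.gcd (orderOf g) (orderOf h) = 1 ∨ (Nat.gcd (orderOf g) (orderOf h)).Prime)
  symm := by
    constructor
    rintro g h ⟨hne, hd⟩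
    exact ⟨hne.symm, by rwa [Nat.gcd_comm]⟩
  loopless := by constructor; rintro g ⟨hne, -⟩; exact hne rfl

/-- A set of vertices is independent if no two of its elements are adjacent. -/
def IsIndepSet {V : Type*} (Γ : SimpleGraph V) (s : Set V) : Prop :=
  s.Pairwise fun a b => ¬ Γ.Adj a b

open scoped Classical in
/-- The independence number of a graph on a finite vertex set. -/
noncomputable def indepNum {V : Type*} [Fintype V] (Γ : SimpleGraph V) : ℕ :=
  Finset.univ.sup fun s : Finset V => if IsIndepSet Γ (s : Set V) then s.card else 0

/-- A graph is split if its vertex set can be partitioned into two disjoint nonempty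
subsets, one a clique and the other an independent set. -/
def IsSplit {V : Type*} (Γ : SimpleGraph V) : Prop :=
  ∃ K I : Set V, K.Nonempty ∧ I.Nonempty ∧ Disjoint K I ∧ K ∪ I = Set.univ ∧
    Γ.IsClique K ∧ IsIndepSet Γ I

lemma dvd_helper {k m d : ℕ} (hk : 1 ≤ k) (hd : d ∣ 2 ^ (k+1) * m) (h2 : ¬ 2 ^ k ∣ d) :
    d ∣ 2 ^ (k-1) * m := by
  obtain ⟨d1, d2, h1, h2', rfl⟩ := exists_dvd_and_dvd_of_dvd_mul hd
  obtain ⟨e, he, rfl⟩ := (Nat.dvd_prime_pow Nat.prime_two).mp h1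
  have hek : e < k := by
    by_contra h
    exact h2 (dvd_mul_of_dvd_left (pow_dvd_pow 2 (by omega)) d2)
  exact mul_dvd_mul (pow_dvd_pow 2 (by omega)) h2'

lemma order_iff {k m : ℕ} (hk : 1 ≤ k) (hm : Odd m) (i : ℕ) :
    ¬ 4 ∣ (2 ^ (k+1) * m) / Nat.gcd (2 ^ (k+1) * m) i ↔ 2 ^ k ∣ i := by
  have hm0 : m ≠ 0 := by rintro rfl; simp at hm
  have hfac : 2 ^ (k+1) * m = 4 * (2 ^ (k-1) * m) := by
    rw [show (4:ℕ) = 2^2 by norm_num, ← mul_assoc, ← pow_add]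
    congr 2
    omega
  have hdN : Nat.gcd (2 ^ (k+1) * m) i ∣ 2 ^ (k+1) * m := Nat.gcd_dvd_left _ _
  have key : (4 ∣ (2 ^ (k+1) * m) / Nat.gcd (2 ^ (k+1) * m) i) ↔
      Nat.gcd (2 ^ (k+1) * m) i ∣ 2 ^ (k-1) * m := by
    rw [Nat.dvd_div_iff_mul_dvd hdN, mul_comm, hfac,
      Nat.mul_dvd_mul_iff_left (show (0:ℕ) < 4 by norm_num), ← hfac]
  rw [key]
  constructor
  · intro h
    by_contra hki
    exact h (dvd_helper hk hdN (fun hc => hki (hc.trans (Nat.gcd_dvd_right _ _))))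
  · intro hki hdvd
    have hk2 : 2 ^ k ∣ Nat.gcd (2 ^ (k+1) * m) i :=
      Nat.dvd_gcd (dvd_mul_of_dvd_left (pow_dvd_pow 2 (by omega)) m) hki
    have h1 : 2 ^ (k-1) * 2 ∣ 2 ^ (k-1) * m := by
      have e : 2 ^ (k-1) * 2 = 2 ^ k := by rw [← pow_succ]; congr 1; omega
      rw [e]; exact hk2.trans hdvd
    have h2m : (2:ℕ) ∣ m :=
      (Nat.mul_dvd_mul_iff_left (by positivity : 0 < 2 ^ (k-1))).mp h1
    rw [Nat.odd_iff] at hm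
    omega

lemma count_lemma (N d t : ℕ) (hd : 0 < d) (hN : N = d * t) [NeZero N] :
    (Finset.univ.filter fun x : ZMod N => d ∣ x.val).card = t := by
  subst hN
  have : (Finset.univ.filter fun x : ZMod (d * t) => d ∣ x.val).card
      = (Finset.range t).card := by
    apply Finset.card_nbij' (fun x => x.val / d) (fun j => ((d * j : ℕ) : ZMod (d * t)))
    · intro x hx
      exact Finset.mem_range.mpr (Nat.div_lt_of_lt_mul (ZMod.val_lt x))
    · intro j hj
      simp only [Finset.mem_coe, Finset.mem_range] at hj
      simp only [Finset.mem_coe, Finset.mem_filter, Finset.mem_univ, true_and]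
      rw [ZMod.val_natCast, Nat.mod_eq_of_lt (mul_lt_mul_of_pos_left hj hd)]
      exact dvd_mul_right d j
    · intro x hx
      simp only [Finset.mem_coe, Finset.mem_filter] at hx
      dsimp only
      rw [Nat.mul_div_cancel' hx.2, ZMod.natCast_zmod_val]
    · intro j hj
      simp only [Finset.mem_coe, Finset.mem_range] at hj
      dsimp only
      rw [ZMod.val_natCast, Nat.mod_eq_of_lt (mul_lt_mul_of_pos_left hj hd),
        Nat.mul_div_cancel_left j hd]
  rw [this, Finset.card_range]

theorem indepNum_dicyclic_even (n k m : ℕ) [NeZero n] (hn : 3 ≤ n) (hk : 1 ≤ k)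
    (hm : Odd m) (hnkm : n = 2 ^ k * m) :
    indepNum (primeCoprimeGraph (QuaternionGroup n)) = 4 * n - 2 * m := by
  classical
  haveI : NeZero (2 * n) := ⟨by have := NeZero.pos n; omega⟩
  set Γ := primeCoprimeGraph (QuaternionGroup n) with hΓ
  have hm0 : 0 < m := hm.pos
  have hNform : 2 * n = 2 ^ (k + 1) * m := by rw [hnkm, pow_succ]; ring
  have h2mn : 2 * m ≤ n := by
    rw [hnkm]
    calc 2 * m = 2 ^ 1 * m := by norm_num
    _ ≤ 2 ^ k * m := mul_le_mul_left (Nat.pow_le_pow_right (by norm_num) hk) m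
  -- the condition on `a i`
  have hcond : ∀ i : ZMod (2 * n),
      (¬ 4 ∣ orderOf (QuaternionGroup.a i) ↔ 2 ^ k ∣ i.val) := by
    intro i
    have h := order_iff hk hm i.val
    rw [← hNform] at h
    rw [QuaternionGroup.orderOf_a i]
    exact h
  set S : Finset (QuaternionGroup n) :=
    Finset.univ.filter (fun g => 4 ∣ orderOf g) with hSdef
  -- cardinality of the complement
  have hcompl : Finset.univ.filter (fun g : QuaternionGroup n => ¬ 4 ∣ orderOf g)
      = (Finset.univ.filter fun i : ZMod (2 * n) => 2 ^ k ∣ i.val).image QuaternionGroup.a := by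
    ext g
    simp only [Finset.mem_filter, Finset.mem_univ, true_and, Finset.mem_image]
    cases g with
    | a i =>
      constructor
      · intro h
        exact ⟨i, (hcond i).mp h, rfl⟩
      · rintro ⟨j, hj, hji⟩
        injection hji with hji
        subst hji
        exact (hcond j).mpr hj
    | xa i =>
      simp [QuaternionGroup.orderOf_xa]
  have hcard_compl : (Finset.univ.filter (fun g : QuaternionGroup n => ¬ 4 ∣ orderOf g)).card
      = 2 * m := by
    rw [hcompl, Finset.card_image_of_injective _ (fun x y hxy => by injection hxy)]
    exact count_lemma (2 * n) (2 ^ k) (2 * m) (by positivity)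
      (by rw [hnkm]; ring)
  have hScard : S.card = 4 * n - 2 * m := by
    have hsum := Finset.card_filter_add_card_filter_not
      (s := (Finset.univ : Finset (QuaternionGroup n))) (p := fun g => 4 ∣ orderOf g)
    rw [Finset.card_univ, QuaternionGroup.card] at hsum
    rw [← hSdef] at hsum
    omega
  -- S is independent
  have hSind : IsIndepSet Γ (S : Set (QuaternionGroup n)) := by
    intro g hg h hh hne hadj
    rw [Finset.mem_coe, hSdef, Finset.mem_filter] at hg hh
    have h4 : 4 ∣ Nat.gcd (orderOf g) (orderOf h) := Nat.dvd_gcd hg.2 hh.2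
    rcases hadj.2 with h1 | hp
    · rw [h1] at h4; omega
    · rcases hp.eq_one_or_self_of_dvd 4 h4 with h' | h'
      · omega
      · rw [← h'] at hp
        norm_num at hp
  -- upper bound
  have hub : ∀ s : Finset (QuaternionGroup n),
      IsIndepSet Γ (s : Set (QuaternionGroup n)) → s.card ≤ 4 * n - 2 * m := by
    intro s hs
    by_cases hall : ∀ g ∈ s, 4 ∣ orderOf g
    · have hsub : s ⊆ S := fun g hg => Finset.mem_filter.mpr ⟨Finset.mem_univ g, hall g hg⟩
      calc s.card ≤ S.card := Finset.card_le_card hsub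
      _ = 4 * n - 2 * m := hScard
    · push_neg at hall
      obtain ⟨g, hgs, hg4⟩ := hall
      have hxa : ∀ i : ZMod (2 * n), QuaternionGroup.xa i ∉ s := by
        intro i hi
        have hne : g ≠ QuaternionGroup.xa i := by
          rintro rfl
          exact hg4 (by rw [QuaternionGroup.orderOf_xa])
        refine hs hgs hi hne ⟨hne, ?_⟩
        rw [QuaternionGroup.orderOf_xa]
        obtain ⟨d', hd'⟩ : ∃ d', Nat.gcd (orderOf g) 4 = d' := ⟨_, rfl⟩
        have hd : d' ∣ 4 := hd' ▸ Nat.gcd_dvd_right _ _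
        have hne4 : d' ≠ 4 := fun h => hg4 (h ▸ hd' ▸ Nat.gcd_dvd_left _ _)
        have hpos : 0 < d' := hd' ▸ Nat.gcd_pos_of_pos_right _ (by norm_num)
        have hle : d' ≤ 4 := Nat.le_of_dvd (by norm_num) hd
        rw [hd']
        interval_cases d'
        · exact Or.inl rfl
        · exact Or.inr Nat.prime_two
        · exact absurd hd (by norm_num)
        · exact absurd rfl hne4
      have hsub : s ⊆ Finset.univ.image QuaternionGroup.a := by
        intro x hx
        cases x with
        | a i => exact Finset.mem_image.mpr ⟨i, Finset.mem_univ i, rfl⟩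
        | xa i => exact absurd hx (hxa i)
      have hle2n : s.card ≤ 2 * n := by
        calc s.card ≤ (Finset.univ.image (QuaternionGroup.a (n := n))).card :=
          Finset.card_le_card hsub
        _ ≤ (Finset.univ : Finset (ZMod (2 * n))).card := Finset.card_image_le
        _ = 2 * n := by rw [Finset.card_univ, ZMod.card]
      omega
  -- conclusion
  unfold indepNum
  apply le_antisymm
  · apply Finset.sup_le
    intro s _
    split_ifs with h
    · exact hub s h
    · exact Nat.zero_le _
  · have hle := Finset.le_sup (f := fun s : Finset (QuaternionGroup n) =>
      if IsIndepSet Γ (s : Set (QuaternionGroup n)) then s.card else 0) (Finset.mem_univ S)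
    refine le_trans ?_ hle
    show 4 * n - 2 * m ≤ if IsIndepSet Γ (S : Set (QuaternionGroup n)) then S.card else 0
    rw [if_pos hSind, hScard]
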